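/- Let F be a finite field of characteristic p with |F| = p^k. Then there exists a nonzero element a in F such that the polynomial T^p - a^{p-1}T - 1 has no root in F; consequently the extension of F of degree p is generated by a root of a polynomial of the form T^p - a^{p-1}T - 1. -/

import Mathlib

open Polynomial

section Aux

/-- In a commutative ring of characteristic `p` prime, `(i : R) ^ p = i`. -/
private lemma natCast_pow_char {p : ℕ} (hp : p.Prime) {R : Type*} [CommRing R] [CharP R p]
    (i : ℕ) : (i : R) ^ p = (i : R) := by
  haveI : Fact p.Prime := ⟨hp⟩
  have h := congrArg (ZMod.castHom (dvd_refl p) R) (ZMod.pow_card (i : ZMod p))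
  rwa [map_pow, map_natCast] at h

/-- Fixed points of the `|F|`-power map in a field extension of a finite field `F`
lie in the image of `F`. -/
private lemma mem_range_of_pow_card {F E : Type*} [Field F] [Fintype F] [Field E]
    [Algebra F E] {x : E} (hx : x ^ Fintype.card F = x) :
    x ∈ Set.range (algebraMap F E) := by
  classical
  by_contra hc
  set q := Fintype.card F with hq
  have hq1 : 1 < q := Fintype.one_lt_card
  set P : E[X] := X ^ q - X with hP
  have hPdeg : P.natDegree = q := FiniteField.X_pow_card_sub_X_natDegree_eq E hq1
  have hP0 : P ≠ 0 := by
    intro h0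
    rw [h0, natDegree_zero] at hPdeg
    omega
  set T : Finset E := insert x (Finset.univ.image (algebraMap F E)) with hT
  have hxmem : x ∉ Finset.univ.image (algebraMap F E) := by
    intro hmem
    obtain ⟨b, _, hb⟩ := Finset.mem_image.mp hmem
    exact hc ⟨b, hb⟩
  have hTcard : T.card = q + 1 := by
    rw [hT, Finset.card_insert_of_notMem hxmem,
      Finset.card_image_of_injective _ (algebraMap F E).injective, Finset.card_univ]
  have hroots : T.val ≤ P.roots := by
    refine (Multiset.le_iff_subset T.nodup).mpr ?_
    intro y hy
    rw [Finset.mem_val, hT, Finset.mem_insert] at hy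
    rw [mem_roots hP0]
    rcases hy with rfl | hy
    · simp [hP, IsRoot, hx]
    · obtain ⟨b, _, rfl⟩ := Finset.mem_image.mp hy
      simp only [hP, IsRoot, eval_sub, eval_pow, eval_X]
      rw [← map_pow, FiniteField.pow_card, sub_self]
  have := Multiset.card_le_card hroots
  rw [Finset.card_val, hTcard] at this
  have h2 := P.card_roots'
  omega

end Aux

section Irred

/-- If `T^p - a^(p-1) T - 1` has no root in `F`, it is irreducible over `F`. -/
private lemma irred_of_no_root {p k : ℕ} (hp : p.Prime) (hk : 0 < k) {F : Type*} [Field F]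
    [Fintype F] [CharP F p] (hcard : Fintype.card F = p ^ k) {a : F} (ha : a ≠ 0)
    (h : ∀ x : F, x ^ p - a ^ (p - 1) * x - 1 ≠ 0) :
    Irreducible (X ^ p - C (a ^ (p - 1)) * X - 1 : F[X]) := by
  haveI : Fact p.Prime := ⟨hp⟩
  have hp1 : 1 < p := hp.one_lt
  set c : F := a ^ (p - 1) with hc
  set f : F[X] := X ^ p - C c * X - 1 with hf
  have hfeq : f = X ^ p - (C c * X + 1) := by ring
  have hmonic : f.Monic := by
    rw [hfeq]
    apply monic_X_pow_sub
    have hdegle : (C c * X + 1 : F[X]).degree ≤ 1 := by compute_degree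
    exact lt_of_le_of_lt hdegle (by exact_mod_cast hp1)
  have hf0 : f ≠ 0 := hmonic.ne_zero
  have hdeg : f.natDegree = p := by
    rw [hfeq]
    rw [natDegree_sub_eq_left_of_natDegree_lt]
    · exact natDegree_X_pow p
    · rw [natDegree_X_pow]
      refine lt_of_le_of_lt (natDegree_add_le _ _) ?_
      simp only [natDegree_one, max_le_iff]
      have h1 : (C c * X).natDegree ≤ 1 := by
        refine le_trans (natDegree_mul_le) ?_
        simp
      omega
  -- a root in the algebraic closure
  set E := AlgebraicClosure F with hE
  have hdegne : f.degree ≠ 0 := by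
    rw [degree_eq_natDegree hf0, hdeg]
    exact_mod_cast (by omega : p ≠ 0)
  obtain ⟨α, hα⟩ := IsAlgClosed.exists_aeval_eq_zero E f hdegne
  have hint : IsIntegral F α := ⟨f, hmonic, by rwa [← aeval_def]⟩
  set g := minpoly F α with hg
  have hgdvd : g ∣ f := minpoly.dvd F α hα
  have hgmonic : g.Monic := minpoly.monic hint
  set d := g.natDegree with hd
  have hd_pos : 0 < d := minpoly.natDegree_pos hint
  have hd_le : d ≤ p := hdeg ▸ natDegree_le_of_dvd hgdvd hf0
  set ab : E := algebraMap F E a with hab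
  have hab0 : ab ≠ 0 := by
    rw [hab]
    exact fun h0 => ha ((_root_.map_eq_zero_iff _ (algebraMap F E).injective).mp h0)
  set cb : E := algebraMap F E c with hcb
  have hαeq : α ^ p - cb * α - 1 = 0 := by
    have := hα
    rw [hf] at this
    simpa [hcb] using this
  -- every root r of (map g) satisfies r^p - cb*r - 1 = 0
  set gE := g.map (algebraMap F E) with hgE
  have hroot_eq : ∀ r ∈ gE.roots, r ^ p - cb * r - 1 = 0 := by
    intro r hr
    have hr' : gE.IsRoot r := isRoot_of_mem_roots hr
    have hdvdE : gE ∣ f.map (algebraMap F E) := Polynomial.map_dvd _ hgdvd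
    have hfr : (f.map (algebraMap F E)).IsRoot r := hr'.dvd hdvdE
    rw [hf] at hfr
    simpa [IsRoot, hcb] using hfr
  -- the gamma of each root is fixed by frobenius
  set γ : E → E := fun r => (r - α) * ab⁻¹ with hγ
  have hγfix : ∀ r ∈ gE.roots, γ r ^ p = γ r := by
    intro r hr
    have h1 : r ^ p - cb * r - 1 = 0 := hroot_eq r hr
    have h2 : (r - α) ^ p = cb * (r - α) := by
      rw [sub_pow_char]
      linear_combination h1 - hαeq
    have hcb_ab : cb = ab ^ (p - 1) := by
      rw [hcb, hc, hab, map_pow]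
    have habp : ab ^ p = ab ^ (p - 1) * ab := by
      rw [← pow_succ]
      congr 1
      omega
    rw [hγ]
    simp only
    rw [mul_pow, h2, hcb_ab, inv_pow, habp]
    have h3 : ab ^ (p - 1) ≠ 0 := pow_ne_zero _ hab0
    rw [mul_inv, show ab ^ (p - 1) * (r - α) * ((ab ^ (p - 1))⁻¹ * ab⁻¹) = (ab ^ (p - 1) * (ab ^ (p - 1))⁻¹) * ((r - α) * ab⁻¹) by ring]
    rw [mul_inv_cancel₀ h3, one_mul]
  -- rewrite each root as α + ab * γ r
  have hroot_form : ∀ r ∈ gE.roots, r = α + ab * γ r := by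
    intro r _
    have hcalc : ab * ((r - α) * ab⁻¹) = r - α := by
      rw [mul_comm, mul_assoc, inv_mul_cancel₀ hab0, mul_one]
    rw [hγ]
    simp only
    rw [hcalc]
    ring
  -- sum of roots
  have hsplit : Splits gE := IsAlgClosed.splits gE
  have hsum : gE.nextCoeff = -gE.roots.sum :=
    hsplit.nextCoeff_eq_neg_sum_roots_of_monic (hgmonic.map _)
  have hcardroots : Multiset.card gE.roots = d := by
    rw [← hsplit.natDegree_eq_card_roots, hgE, natDegree_map]
  set G : E := (gE.roots.map γ).sum with hG
  have hGfix : G ^ p = G := by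
    have hfrob : frobenius E p G = G := by
      rw [hG, map_multiset_sum, Multiset.map_map]
      congr 1
      apply Multiset.map_congr rfl
      intro r hr
      simpa [frobenius_def] using hγfix r hr
    simpa [frobenius_def] using hfrob
  have hpowiter : ∀ n, G ^ p ^ n = G := by
    intro n
    induction n with
    | zero => simp
    | succ m ih => rw [pow_succ, pow_mul, ih, hGfix]
  have hGq : G ^ Fintype.card F = G := by rw [hcard]; exact hpowiter k
  obtain ⟨b, hb⟩ := mem_range_of_pow_card hGq
  -- assemble the sum formula
  have hsum2 : gE.roots.sum = (d : E) * α + ab * G := by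
    have hmapeq : gE.roots.map (fun r => r) = gE.roots.map (fun r => α + ab * γ r) :=
      Multiset.map_congr rfl (fun r hr => hroot_form r hr)
    calc gE.roots.sum = (gE.roots.map (fun r => r)).sum := by rw [Multiset.map_id']
      _ = (gE.roots.map (fun r => α + ab * γ r)).sum := by rw [hmapeq]
      _ = (gE.roots.map (fun _ => α)).sum + (gE.roots.map (fun r => ab * γ r)).sum := by
          rw [← Multiset.sum_map_add]
      _ = (d : E) * α + ab * G := by
          rw [Multiset.map_const', Multiset.sum_replicate, hcardroots,
            Multiset.sum_map_mul_left, hG, nsmul_eq_mul]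
  -- nextCoeff lies in the image of F
  have hnext : gE.nextCoeff = algebraMap F E g.nextCoeff :=
    nextCoeff_map (algebraMap F E).injective g
  -- conclude d = p
  have hdp : d = p := by
    by_contra hne
    have hdlt : d < p := lt_of_le_of_ne hd_le hne
    have hdF0 : (d : F) ≠ 0 := by
      rw [Ne, CharP.cast_eq_zero_iff F p]
      intro hdvd
      exact absurd (Nat.le_of_dvd hd_pos hdvd) (not_le.mpr hdlt)
    have key : (d : E) * α = -(algebraMap F E g.nextCoeff) - ab * G := by
      have h1 : algebraMap F E g.nextCoeff = -((d : E) * α + ab * G) := by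
        rw [← hnext, hsum, hsum2]
      linear_combination h1
    have hdE : algebraMap F E (d : F) = (d : E) := map_natCast _ d
    have hdE0 : (d : E) ≠ 0 := by
      rw [← hdE]
      exact fun h0 => hdF0 ((_root_.map_eq_zero_iff _ (algebraMap F E).injective).mp h0)
    set x₀ : F := (d : F)⁻¹ * (-(g.nextCoeff) - a * b) with hx₀
    have hmapx : algebraMap F E x₀ = α := by
      rw [hx₀, map_mul, map_inv₀, map_sub, map_neg, map_mul, map_natCast, hb, ← hab, ← key]
      rw [← mul_assoc, inv_mul_cancel₀ hdE0, one_mul]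
    have hx0root : x₀ ^ p - c * x₀ - 1 = 0 := by
      have h2 : algebraMap F E (x₀ ^ p - c * x₀ - 1) = α ^ p - cb * α - 1 := by
        rw [map_sub, map_sub, map_mul, map_pow, map_one, hmapx, hcb]
      exact (algebraMap F E).injective (by rw [h2, hαeq, map_zero])
    exact h x₀ hx0root
  -- hence f = g, which is irreducible
  have hfg : f = g := by
    obtain ⟨u, hu⟩ := hgdvd
    have hu0 : u ≠ 0 := by rintro rfl; rw [mul_zero] at hu; exact hf0 hu
    have hdu : u.natDegree = 0 := by
      have hnd := natDegree_mul hgmonic.ne_zero hu0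
      rw [← hu, hdeg, ← hd, hdp] at hnd
      omega
    have hul : u = C (u.coeff 0) := eq_C_of_natDegree_eq_zero hdu
    have hl := congrArg leadingCoeff hu
    rw [hmonic.leadingCoeff, leadingCoeff_mul, hgmonic.leadingCoeff, one_mul] at hl
    have hu1 : u = 1 := by
      have hlc : u.leadingCoeff = u.coeff 0 := by rw [Polynomial.leadingCoeff, hdu]
      rw [hul, ← hlc, ← hl, map_one]
    rw [hu, hu1, mul_one]
  rw [hfg, hg]
  exact minpoly.irreducible hint

end Irred

/-- Counting argument: some nonzero `a` gives a polynomial with no root. -/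
private lemma exists_no_root {p k : ℕ} (hp : p.Prime) (hk : 0 < k) {F : Type*} [Field F]
    [Fintype F] [CharP F p] (hcard : Fintype.card F = p ^ k) :
    ∃ a : F, a ≠ 0 ∧ ∀ x : F, x ^ p - a ^ (p - 1) * x - 1 ≠ 0 := by
  classical
  haveI : Fact p.Prime := ⟨hp⟩
  have hp1 : 1 < p := hp.one_lt
  set q := Fintype.card F with hq
  have hq2 : 2 ≤ q := by
    rw [hcard]
    calc 2 ≤ p := hp.two_le
      _ = p ^ 1 := (pow_one p).symm
      _ ≤ p ^ k := Nat.pow_le_pow_right hp.pos hk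
  by_contra hcon
  push_neg at hcon
  -- every nonzero a has a root
  have hx : ∀ a : F, a ≠ 0 → ∃ x : F, x ^ p - a ^ (p - 1) * x - 1 = 0 := by
    intro a ha
    obtain ⟨x, hx1⟩ := hcon a ha
    exact ⟨x, hx1⟩
  set r : F → F := fun a => if h : a ≠ 0 then Classical.choose (hx a h) else 0 with hr
  have hrspec : ∀ a : F, a ≠ 0 → (r a) ^ p - a ^ (p - 1) * (r a) - 1 = 0 := by
    intro a ha
    rw [hr]
    simp only [ha, dif_pos, ne_eq, not_false_eq_true]
    exact Classical.choose_spec (hx a ha)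
  set S : Finset (F × F) :=
    Finset.univ.filter (fun z : F × F => z.1 ≠ 0 ∧ z.2 ^ p - z.1 ^ (p - 1) * z.2 - 1 = 0)
    with hS
  -- lower bound
  set A : Finset F := Finset.univ.erase 0 with hA
  have hAcard : A.card = q - 1 := by
    rw [hA, Finset.card_erase_of_mem (Finset.mem_univ 0), Finset.card_univ]
  have hlow : (q - 1) * p ≤ S.card := by
    have := Finset.card_le_card_of_injOn
      (fun z : F × ℕ => (z.1, r z.1 + (z.2 : F) * z.1))
      (s := A ×ˢ Finset.range p) (t := S) ?_ ?_
    · rwa [Finset.card_product, hAcard, Finset.card_range] at this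
    · rintro ⟨a, i⟩ hz
      rw [Finset.mem_coe, Finset.mem_product, hA, Finset.mem_erase] at hz
      obtain ⟨⟨ha, -⟩, hi⟩ := hz
      rw [Finset.mem_range] at hi
      rw [hS, Finset.mem_coe, Finset.mem_filter]
      refine ⟨Finset.mem_univ _, ha, ?_⟩
      have hap : a ^ (p - 1) * a = a ^ p := by
        rw [← pow_succ]
        congr 1
        omega
      rw [add_pow_char, mul_pow, natCast_pow_char hp i]
      have := hrspec a ha
      linear_combination this - (i : F) * hap
    · rintro ⟨a, i⟩ ha' ⟨b, j⟩ hb' hab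
      rw [Finset.mem_coe, Finset.mem_product, hA, Finset.mem_erase, Finset.mem_range] at ha' hb'
      simp only [Prod.mk.injEq] at hab
      obtain ⟨h1, h2⟩ := hab
      subst h1
      have : (i : F) = (j : F) := by
        have h3 : (i : F) * a = (j : F) * a := by linear_combination h2
        exact mul_right_cancel₀ ha'.1.1 h3
      have hij : i = j := CharP.natCast_injOn_Iio F p ha'.2 hb'.2 this
      rw [hij]
  -- upper bound
  have hfib0 : (S.filter (fun z => z.2 = (0 : F))).card = 0 := by
    rw [Finset.card_eq_zero, Finset.eq_empty_iff_forall_notMem]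
    rintro ⟨a, y⟩ hy
    rw [Finset.mem_filter, hS, Finset.mem_filter] at hy
    obtain ⟨⟨-, -, h1⟩, h2⟩ := hy
    simp only at h1 h2
    subst h2
    rw [zero_pow (by omega : p ≠ 0), mul_zero] at h1
    simp at h1
  have hfib1 : (S.filter (fun z => z.2 = (1 : F))).card = 0 := by
    rw [Finset.card_eq_zero, Finset.eq_empty_iff_forall_notMem]
    rintro ⟨a, y⟩ hy
    rw [Finset.mem_filter, hS, Finset.mem_filter] at hy
    obtain ⟨⟨-, ha, h1⟩, h2⟩ := hy
    simp only at h1 h2 ha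
    subst h2
    rw [one_pow, mul_one] at h1
    have hpa : a ^ (p - 1) = 0 := by linear_combination -h1
    exact ha (pow_eq_zero_iff (by omega : p - 1 ≠ 0) |>.mp hpa)
  have hfib : ∀ x : F, x ≠ 0 → (S.filter (fun z => z.2 = x)).card ≤ p - 1 := by
    intro x hx0
    set P : F[X] := X ^ (p - 1) * C x - C (x ^ p - 1) with hP
    have hPdeg : P.natDegree = p - 1 := by
      rw [hP, natDegree_sub_eq_left_of_natDegree_lt]
      · rw [natDegree_mul_C hx0, natDegree_X_pow]
      · rw [natDegree_mul_C hx0, natDegree_X_pow, natDegree_C]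
        omega
    have hP0 : P ≠ 0 := by
      intro h0
      rw [h0, natDegree_zero] at hPdeg
      omega
    have hcard1 : (S.filter (fun z => z.2 = x)).card ≤ P.roots.toFinset.card := by
      apply Finset.card_le_card_of_injOn (fun z => z.1)
      · rintro ⟨a, y⟩ hy
        rw [Finset.mem_coe, Finset.mem_filter, hS, Finset.mem_filter] at hy
        obtain ⟨⟨-, ha, h1⟩, h2⟩ := hy
        simp only at h1 h2 ha ⊢
        subst h2
        rw [Finset.mem_coe, Multiset.mem_toFinset, mem_roots hP0]
        rw [hP]
        simp only [IsRoot, eval_sub, eval_mul, eval_pow, eval_X, eval_C]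
        linear_combination -h1
      · rintro ⟨a, y⟩ hy ⟨a', y'⟩ hy' hh
        rw [Finset.mem_coe, Finset.mem_filter] at hy hy'
        simp only at hh
        rw [Prod.mk.injEq]
        exact ⟨hh, hy.2.trans hy'.2.symm⟩
    refine le_trans hcard1 (le_trans (Multiset.toFinset_card_le _) ?_)
    rw [← hPdeg]
    exact P.card_roots'
  have hup : S.card ≤ (q - 2) * (p - 1) := by
    rw [Finset.card_eq_sum_card_fiberwise (f := fun z : F × F => z.2) (t := Finset.univ)
      (fun z _ => Finset.mem_univ z.2)]
    set B : Finset F := (Finset.univ.erase 0).erase 1 with hB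
    have hBcard : B.card = q - 2 := by
      rw [hB, Finset.card_erase_of_mem, Finset.card_erase_of_mem (Finset.mem_univ 0),
        Finset.card_univ]
      · omega
      · exact Finset.mem_erase.mpr ⟨one_ne_zero, Finset.mem_univ 1⟩
    have hsum_eq : ∑ x : F, (S.filter (fun z => z.2 = x)).card
        = ∑ x ∈ B, (S.filter (fun z => z.2 = x)).card := by
      symm
      apply Finset.sum_subset (Finset.subset_univ B)
      intro x _ hxB
      by_cases hx1 : x = 1
      · rw [hx1]; exact hfib1
      by_cases hx0 : x = 0
      · rw [hx0]; exact hfib0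
      exact absurd (Finset.mem_erase.mpr ⟨hx1, Finset.mem_erase.mpr ⟨hx0, Finset.mem_univ x⟩⟩)
        (hB ▸ hxB)
    rw [hsum_eq]
    calc ∑ x ∈ B, (S.filter (fun z => z.2 = x)).card ≤ ∑ _x ∈ B, (p - 1) := by
          apply Finset.sum_le_sum
          intro x hxB
          rw [hB, Finset.mem_erase, Finset.mem_erase] at hxB
          exact hfib x hxB.2.1
      _ = (q - 2) * (p - 1) := by rw [Finset.sum_const, hBcard, smul_eq_mul]
  -- contradiction
  have hle := le_trans hlow hup
  have hp2 : 2 ≤ p := hp.two_le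
  zify [show 1 ≤ q by omega, show 2 ≤ q from hq2, show 1 ≤ p by omega] at hle
  nlinarith [hle, hq2, hp2]

/-- Over a finite field `F` of characteristic `p` with `|F| = p ^ k`, there is a nonzero
`a : F` such that `T ^ p - a ^ (p-1) * T - 1` has no root in `F`; consequently this
polynomial is irreducible, so a root of it generates the extension of `F` of degree `p`. -/
theorem stmt_0 (p k : ℕ) (hp : p.Prime) (hk : 0 < k)
    (F : Type*) [Field F] [Fintype F] [CharP F p]
    (hcard : Fintype.card F = p ^ k) :
    ∃ a : F, a ≠ 0 ∧ (∀ x : F, x ^ p - a ^ (p - 1) * x - 1 ≠ 0) ∧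
      Irreducible (X ^ p - C (a ^ (p - 1)) * X - 1 : F[X]) := by
  obtain ⟨a, ha, hnr⟩ := exists_no_root hp hk hcard
  exact ⟨a, ha, hnr, irred_of_no_root hp hk hcard ha hnr⟩
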